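/- Let A be the para-Zorn matrix algebra over F built from (B, ·, (·|·), k), and for each nonzero λ ∈ F let ρ₁(λ), ρ₂(λ), ρ₃(λ) be the linear maps ρ₁(λ)[[α,x],[y,β]] = [[λα, λx],[λ⁻¹y, λ⁻¹β]], ρ₂(λ)[[α,x],[y,β]] = [[λα, λ⁻¹x],[λy, λ⁻¹β]], ρ₃(λ)[[α,x],[y,β]] = [[λ⁻²α, x],[y, λ²β]]. Then: (i) ρ_j(λ)(XY) = (ρ_{j+1}(λ)X)(ρ_{j+2}(λ)Y) for all X, Y ∈ A and all j = 1, 2, 3 (indices modulo 3); (ii) ρ_j(μ)∘ρ_j(ν) = ρ_j(μν) and ρ_j(1) = Id; (iii) ρ_j(μ)∘ρ_k(ν) = ρ_k(ν)∘ρ_j(μ) for all j, k; (iv) ρ₁(λ)∘ρ₂(λ)∘ρ₃(λ) = Id. -/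

import Mathlib

/-- The product of the para-Zorn matrix algebra (paper Eq. (5.17)): elements
are written `(α, x, y, β)` for the vector matrix `[[α, x],[y, β]]`. -/
def zornMul {F B : Type*} [Field F] [AddCommGroup B] [Module F B]
    (bmul : B →ₗ[F] B →ₗ[F] B) (form : B →ₗ[F] B →ₗ[F] F) (k : F)
    (X Y : F × B × B × F) : F × B × B × F :=
  (X.2.2.2 * Y.2.2.2 + form X.2.2.1 Y.2.1,
   X.1 • Y.2.1 + Y.2.2.2 • X.2.1 + k • bmul X.2.2.1 Y.2.2.1,
   Y.1 • X.2.2.1 + X.2.2.2 • Y.2.2.1 + k • bmul X.2.1 Y.2.1,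
   X.1 * Y.1 + form X.2.1 Y.2.2.1)

/-- The maps `ρ_j(λ)` of Eqs. (5.21); paper subscripts `1, 2, 3` are encoded
as `1, 2, 0 : Fin 3`. -/
def zornRho {F B : Type*} [Field F] [AddCommGroup B] [Module F B]
    (j : Fin 3) (l : F) (X : F × B × B × F) : F × B × B × F :=
  if j = 1 then (l * X.1, l • X.2.1, l⁻¹ • X.2.2.1, l⁻¹ * X.2.2.2)
  else if j = 2 then (l * X.1, l⁻¹ • X.2.1, l • X.2.2.1, l⁻¹ * X.2.2.2)
  else ((l⁻¹ * l⁻¹) * X.1, X.2.1, X.2.2.1, (l * l) * X.2.2.2)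


section Aux
variable {F B : Type*} [Field F] [AddCommGroup B] [Module F B]
    (bmul : B →ₗ[F] B →ₗ[F] B) (form : B →ₗ[F] B →ₗ[F] F) (k : F)

lemma tri0 (l : F) (hl : l ≠ 0) (X Y : F × B × B × F) :
    zornRho 0 l (zornMul bmul form k X Y) =
      zornMul bmul form k (zornRho 1 l X) (zornRho 2 l Y) := by
  simp only [zornRho, zornMul, Fin.reduceEq, reduceIte, if_true, if_false, Prod.ext_iff]
  refine ⟨by simp only [map_smul, LinearMap.smul_apply, smul_eq_mul]; field_simp; try ring, ?_, ?_,
    by simp only [map_smul, LinearMap.smul_apply, smul_eq_mul]; field_simp; try ring⟩ <;>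
    simp only [map_smul, LinearMap.smul_apply, smul_smul] <;>
    match_scalars <;> (field_simp; try ring)

lemma tri1 (l : F) (hl : l ≠ 0) (X Y : F × B × B × F) :
    zornRho 1 l (zornMul bmul form k X Y) =
      zornMul bmul form k (zornRho 2 l X) (zornRho 0 l Y) := by
  simp only [zornRho, zornMul, Fin.reduceEq, reduceIte, if_true, if_false, Prod.ext_iff]
  refine ⟨by simp only [map_smul, LinearMap.smul_apply, smul_eq_mul]; field_simp; try ring, ?_, ?_,
    by simp only [map_smul, LinearMap.smul_apply, smul_eq_mul]; field_simp; try ring⟩ <;>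
    simp only [map_smul, LinearMap.smul_apply, smul_smul] <;>
    match_scalars <;> (field_simp; try ring)

lemma tri2 (l : F) (hl : l ≠ 0) (X Y : F × B × B × F) :
    zornRho 2 l (zornMul bmul form k X Y) =
      zornMul bmul form k (zornRho 0 l X) (zornRho 1 l Y) := by
  simp only [zornRho, zornMul, Fin.reduceEq, reduceIte, if_true, if_false, Prod.ext_iff]
  refine ⟨by simp only [map_smul, LinearMap.smul_apply, smul_eq_mul]; field_simp; try ring, ?_, ?_,
    by simp only [map_smul, LinearMap.smul_apply, smul_eq_mul]; field_simp; try ring⟩ <;>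
    simp only [map_smul, LinearMap.smul_apply, smul_smul] <;>
    match_scalars <;> (field_simp; try ring)

end Aux

/-- Theorem 5.3 (i)–(iv).  The maps `ρ_j(λ)` satisfy the
global triality relation on the para-Zorn matrix algebra, are multiplicative
in `λ`, commute with each other, and `ρ₁(λ)ρ₂(λ)ρ₃(λ) = Id`. -/
theorem zorn_rho_triality
    (F : Type*) [Field F]
    (B : Type*) [AddCommGroup B] [Module F B]
    (bmul : B →ₗ[F] B →ₗ[F] B) (form : B →ₗ[F] B →ₗ[F] F) (k : F) :
    -- (i) global triality relation
    (∀ (l : F), l ≠ 0 → ∀ (j : Fin 3) (X Y : F × B × B × F),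
      zornRho j l (zornMul bmul form k X Y) =
        zornMul bmul form k (zornRho (j + 1) l X) (zornRho (j + 2) l Y)) ∧
    -- (ii) multiplicativity and unitality
    (∀ (μ ν : F), μ ≠ 0 → ν ≠ 0 → ∀ (j : Fin 3) (X : F × B × B × F),
      zornRho j μ (zornRho j ν X) = zornRho j (μ * ν) X) ∧
    (∀ (j : Fin 3) (X : F × B × B × F), zornRho j (1 : F) X = X) ∧
    -- (iii) commutativity
    (∀ (μ ν : F), μ ≠ 0 → ν ≠ 0 → ∀ (j j' : Fin 3) (X : F × B × B × F),
      zornRho j μ (zornRho j' ν X) = zornRho j' ν (zornRho j μ X)) ∧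
    -- (iv) ρ₁(λ)ρ₂(λ)ρ₃(λ) = Id
    (∀ (l : F), l ≠ 0 → ∀ X : F × B × B × F,
      zornRho 1 l (zornRho 2 l (zornRho 0 l X)) = X) := by
  refine ⟨?_, ?_, ?_, ?_, ?_⟩
  · intro l hl j X Y
    fin_cases j
    · exact tri0 bmul form k l hl X Y
    · exact tri1 bmul form k l hl X Y
    · exact tri2 bmul form k l hl X Y
  · intro μ ν hμ hν j X
    fin_cases j <;>
      simp only [zornRho, Fin.ext_iff, Fin.val_one, Fin.val_two, Fin.isValue, Nat.reduceEqDiff,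
        reduceIte, if_true, if_false, Prod.ext_iff, smul_smul, mul_inv,
        show ((0:Fin 3).val)=0 from rfl, show ((1:Fin 3).val)=1 from rfl,
        show ((2:Fin 3).val)=2 from rfl] <;>
      and_intros <;> first | trivial | ring | module
  · intro j X
    fin_cases j <;> simp [zornRho]
  · intro μ ν hμ hν j j' X
    fin_cases j <;> fin_cases j' <;>
      simp only [zornRho, Fin.ext_iff, Fin.val_one, Fin.val_two, Fin.isValue, Nat.reduceEqDiff,
        reduceIte, if_true, if_false, Prod.ext_iff, smul_smul] <;>
      and_intros <;> first | trivial | ring | module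
  · intro l hl X
    simp only [zornRho, Fin.reduceEq, reduceIte, Prod.ext_iff, smul_smul]
    refine ⟨by field_simp; try ring, ?_, ?_, by field_simp; try ring⟩ <;>
      match_scalars <;> (field_simp; try ring)
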